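/- Let N ≥ 2 and let 0 < γ_1 ≤ γ_2 ≤ ... ≤ γ_N be worker types. Suppose a contract (f_n, R_n)_{n=1}^N satisfies: (i) R_1 − f_1/γ_1 ≥ 0; (ii) 0 ≤ f_1 ≤ f_2 ≤ ... ≤ f_N; (iii) the local downward incentive constraints R_n − f_n/γ_n ≥ R_{n−1} − f_{n−1}/γ_n for all n ∈ {2,...,N}; and (iv) the local upward incentive constraints R_n − f_n/γ_n ≥ R_{n+1} − f_{n+1}/γ_n for all n ∈ {1,...,N−1}. Then the contract satisfies all individual rationality constraints R_n − f_n/γ_n ≥ 0 for every n, and all incentive compatibility constraints R_n − f_n/γ_n ≥ R_i − f_i/γ_n for all n, i ∈ {1,...,N}. -/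

import Mathlib

/-- For nondecreasing positive types, if a contract satisfies
the lowest-type IR constraint, monotone nonnegative frequencies, the local
downward IC constraints and the local upward IC constraints, then it
satisfies all IR constraints and all IC constraints.
Indices run over 1,...,N. -/
theorem local_constraints_imply_IR_IC
    (N : ℕ) (hN : 2 ≤ N) (γ f R : ℕ → ℝ)
    (hγpos : 0 < γ 1)
    (hγmono : ∀ n, 1 ≤ n → n < N → γ n ≤ γ (n + 1))
    (hIR1 : R 1 - f 1 / γ 1 ≥ 0)
    (hf0 : 0 ≤ f 1)
    (hfmono : ∀ n, 1 ≤ n → n < N → f n ≤ f (n + 1))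
    (hLDIC : ∀ n, 2 ≤ n → n ≤ N →
      R n - f n / γ n ≥ R (n - 1) - f (n - 1) / γ n)
    (hLUIC : ∀ n, 1 ≤ n → n + 1 ≤ N →
      R n - f n / γ n ≥ R (n + 1) - f (n + 1) / γ n) :
    (∀ n, 1 ≤ n → n ≤ N → R n - f n / γ n ≥ 0) ∧
    (∀ n i, 1 ≤ n → n ≤ N → 1 ≤ i → i ≤ N →
      R n - f n / γ n ≥ R i - f i / γ n) := by
  -- monotonicity over ranges
  have hγle : ∀ a b, 1 ≤ a → a ≤ b → b ≤ N → γ a ≤ γ b := by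
    intro a b ha hab hbN
    induction hab with
    | refl => exact le_refl _
    | @step m h ih =>
        exact le_trans (ih (by omega)) (hγmono m (le_trans ha h) (by omega))
  have hfle : ∀ a b, 1 ≤ a → a ≤ b → b ≤ N → f a ≤ f b := by
    intro a b ha hab hbN
    induction hab with
    | refl => exact le_refl _
    | @step m h ih =>
        exact le_trans (ih (by omega)) (hfmono m (le_trans ha h) (by omega))
  have hγposall : ∀ n, 1 ≤ n → n ≤ N → 0 < γ n := by
    intro n h1 h2
    exact lt_of_lt_of_le hγpos (hγle 1 n le_rfl h1 h2)
  have hfpos : ∀ n, 1 ≤ n → n ≤ N → 0 ≤ f n := by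
    intro n h1 h2
    exact le_trans hf0 (hfle 1 n le_rfl h1 h2)
  -- downward chaining
  have D : ∀ n, n ≤ N → ∀ i, 1 ≤ i → i ≤ n →
      R n - f n / γ n ≥ R i - f i / γ n := by
    intro n
    induction n with
    | zero => intro _ i hi hin; omega
    | succ m ih =>
        intro hnN i hi hin
        rcases Nat.lt_or_ge i (m + 1) with h | h
        · have him : i ≤ m := by omega
          have h1m : 1 ≤ m := le_trans hi him
          have hmN : m ≤ N := by omega
          have hd := hLDIC (m + 1) (by omega) hnN
          simp only [Nat.add_sub_cancel] at hd
          have ihm := ih hmN i hi him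
          have hγm : 0 < γ m := hγposall m h1m hmN
          have hγ : γ m ≤ γ (m + 1) := hγmono m h1m (by omega)
          have hfi : f i ≤ f m := hfle i m hi him hmN
          have h2 : (f m - f i) / γ (m + 1) ≤ (f m - f i) / γ m := by
            gcongr
          have hs1 : (f m - f i) / γ m = f m / γ m - f i / γ m := sub_div _ _ _
          have hs2 : (f m - f i) / γ (m + 1) = f m / γ (m + 1) - f i / γ (m + 1) :=
            sub_div _ _ _
          linarith
        · have : i = m + 1 := by omega
          subst this
          exact le_refl _
  -- upward chaining
  have U : ∀ k n, 1 ≤ n → n + k ≤ N →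
      R n - f n / γ n ≥ R (n + k) - f (n + k) / γ n := by
    intro k
    induction k with
    | zero => intro n _ _; simp
    | succ k ih =>
        intro n hn hnk
        have hu := hLUIC n hn (by omega)
        have ihn := ih (n + 1) (by omega) (by omega)
        have heq : n + 1 + k = n + (k + 1) := by omega
        rw [heq] at ihn
        have hγn : 0 < γ n := hγposall n hn (by omega)
        have hγ : γ n ≤ γ (n + 1) := hγmono n hn (by omega)
        have hfi : f (n + 1) ≤ f (n + (k + 1)) :=
          hfle (n + 1) (n + (k + 1)) (by omega) (by omega) (by omega)
        have h2 : (f (n + (k + 1)) - f (n + 1)) / γ (n + 1)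
            ≤ (f (n + (k + 1)) - f (n + 1)) / γ n := by
          gcongr
        have hs1 : (f (n + (k + 1)) - f (n + 1)) / γ n
            = f (n + (k + 1)) / γ n - f (n + 1) / γ n := sub_div _ _ _
        have hs2 : (f (n + (k + 1)) - f (n + 1)) / γ (n + 1)
            = f (n + (k + 1)) / γ (n + 1) - f (n + 1) / γ (n + 1) := sub_div _ _ _
        linarith
  have IC : ∀ n i, 1 ≤ n → n ≤ N → 1 ≤ i → i ≤ N →
      R n - f n / γ n ≥ R i - f i / γ n := by
    intro n i hn hnN hi hiN
    rcases le_or_gt i n with h | h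
    · exact D n hnN i hi h
    · have : i = n + (i - n) := by omega
      rw [this]
      exact U (i - n) n hn (by omega)
  refine ⟨?_, IC⟩
  intro n h1 h2
  have hd := D n h2 1 le_rfl h1
  have hγn : 0 < γ n := hγposall n h1 h2
  have hγ : γ 1 ≤ γ n := hγle 1 n le_rfl h1 h2
  have : f 1 / γ n ≤ f 1 / γ 1 := by gcongr
  linarith
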